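/- Let p = m+n with m, n ≥ 0 and p ≥ 1. For an m-matching S of the corona graph C_p, define D(S) to be the set consisting of all internal edges of S together with the pendant edges v_i w_i for exactly those indices i such that the vertex v_i is not covered by any edge of S. Then D(S) is an n-matching of C_p, and S ↦ D(S) is a bijection from the set of m-matchings of C_p onto the set of n-matchings of C_p satisfying D(D(S)) = S. -/

import Mathlib

open Sum Matrix

/-- The corona graph `C_p` on vertices `v_1,…,v_p` (the `inl`s) and `w_1,…,w_p` (the `inr`s):
the `v_i` form a complete graph (internal edges) and each `v_i` is joined
to `w_i` (pendant edges). -/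
def corona (p : ℕ) : SimpleGraph (Fin p ⊕ Fin p) where
  Adj x y :=
    (∃ i j : Fin p, i ≠ j ∧ x = inl i ∧ y = inl j) ∨
    (∃ i : Fin p, x = inl i ∧ y = inr i) ∨
    (∃ i : Fin p, x = inr i ∧ y = inl i)
  symm := by
    constructor
    rintro x y (⟨i, j, hij, rfl, rfl⟩ | ⟨i, rfl, rfl⟩ | ⟨i, rfl, rfl⟩)
    · exact Or.inl ⟨j, i, hij.symm, rfl, rfl⟩
    · exact Or.inr (Or.inr ⟨i, rfl, rfl⟩)
    · exact Or.inr (Or.inl ⟨i, rfl, rfl⟩)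
  loopless := by
    constructor
    rintro x (⟨i, j, hij, rfl, h⟩ | ⟨i, rfl, h⟩ | ⟨i, rfl, h⟩)
    · exact hij (by simpa using h)
    · simp at h
    · simp at h

/-- `s` is an `m`-matching of the graph `G`: a set of `m` edges of `G`,
no two of which share a vertex. -/
def IsNMatching {V : Type*} (G : SimpleGraph V) (m : ℕ) (s : Finset (Sym2 V)) : Prop :=
  s.card = m ∧ (∀ e ∈ s, e ∈ G.edgeSet) ∧
    ∀ e ∈ s, ∀ f ∈ s, e ≠ f → ∀ v : V, v ∈ e → v ∉ f

/-- An edge of the corona graph is internal if both of its endpoints are `v`-vertices. -/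
def isInternal {p : ℕ} (e : Sym2 (Fin p ⊕ Fin p)) : Prop :=
  ∀ v ∈ e, Sum.isLeft v = true

open Classical in
/-- The dual `D(S)` of a matching `S` of the corona graph `C_p`: it consists of all
internal edges of `S` together with the pendant edges `v_i w_i` for exactly those
indices `i` such that `v_i` is not covered by any edge of `S`. -/
noncomputable def Ddual (p : ℕ) (s : Finset (Sym2 (Fin p ⊕ Fin p))) :
    Finset (Sym2 (Fin p ⊕ Fin p)) :=
  s.filter (fun e => isInternal e) ∪
    (Finset.univ.filter (fun i : Fin p =>
        ¬ ∃ e ∈ s, (Sum.inl i : Fin p ⊕ Fin p) ∈ e)).image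
      (fun i => s(Sum.inl i, (Sum.inr i : Fin p ⊕ Fin p)))

namespace CoronaAux

open Classical

variable {p : ℕ}

lemma pendant_mem_edgeSet (i : Fin p) :
    s(Sum.inl i, (Sum.inr i : Fin p ⊕ Fin p)) ∈ (corona p).edgeSet :=
  Or.inr (Or.inl ⟨i, rfl, rfl⟩)

lemma corona_edge {e : Sym2 (Fin p ⊕ Fin p)} (he : e ∈ (corona p).edgeSet) :
    (∃ i j : Fin p, i ≠ j ∧ e = s(Sum.inl i, Sum.inl j)) ∨
      ∃ i : Fin p, e = s(Sum.inl i, Sum.inr i) := by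
  induction e using Sym2.ind with
  | _ x y =>
    rw [SimpleGraph.mem_edgeSet] at he
    rcases he with ⟨i, j, hij, rfl, rfl⟩ | ⟨i, rfl, rfl⟩ | ⟨i, rfl, rfl⟩
    · exact Or.inl ⟨i, j, hij, rfl⟩
    · exact Or.inr ⟨i, rfl⟩
    · exact Or.inr ⟨i, Sym2.eq_swap⟩

lemma not_internal_pendant (i : Fin p) :
    ¬ isInternal s(Sum.inl i, (Sum.inr i : Fin p ⊕ Fin p)) := fun h => by
  simpa using h (Sum.inr i) (by simp)

lemma internal_internal {i j : Fin p} :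
    isInternal s(Sum.inl i, (Sum.inl j : Fin p ⊕ Fin p)) := by
  intro v hv
  rcases Sym2.mem_iff.1 hv with rfl | rfl <;> simp

lemma mem_Ddual {s : Finset (Sym2 (Fin p ⊕ Fin p))} {e : Sym2 (Fin p ⊕ Fin p)} :
    e ∈ Ddual p s ↔ (e ∈ s ∧ isInternal e) ∨
      ∃ i : Fin p, (¬ ∃ f ∈ s, (Sum.inl i : Fin p ⊕ Fin p) ∈ f) ∧
        e = s(Sum.inl i, Sum.inr i) := by
  simp [Ddual, eq_comm]

lemma pendant_eq_iff {i j : Fin p} :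
    s(Sum.inl i, (Sum.inr i : Fin p ⊕ Fin p)) = s(Sum.inl j, Sum.inr j) ↔ i = j := by
  simp [Sym2.eq_iff]

lemma left_filter_internal {i j : Fin p} (hij : i ≠ j) :
    Finset.univ.filter (fun x : Fin p =>
      (Sum.inl x : Fin p ⊕ Fin p) ∈ s(Sum.inl i, Sum.inl j)) = {i, j} := by
  ext x; simp [Sym2.mem_iff]

lemma left_filter_pendant {i : Fin p} :
    Finset.univ.filter (fun x : Fin p =>
      (Sum.inl x : Fin p ⊕ Fin p) ∈ s(Sum.inl i, Sum.inr i)) = {i} := by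
  ext x; simp [Sym2.mem_iff]

lemma covered_card {m : ℕ} {s : Finset (Sym2 (Fin p ⊕ Fin p))}
    (hs : IsNMatching (corona p) m s) :
    (Finset.univ.filter (fun i : Fin p =>
      ∃ e ∈ s, (Sum.inl i : Fin p ⊕ Fin p) ∈ e)).card
      = m + (s.filter (fun e => isInternal e)).card := by
  obtain ⟨hcard, hedge, hdisj⟩ := hs
  have hbi : Finset.univ.filter (fun i : Fin p =>
        ∃ e ∈ s, (Sum.inl i : Fin p ⊕ Fin p) ∈ e)
      = s.biUnion (fun e => Finset.univ.filter
          (fun i : Fin p => (Sum.inl i : Fin p ⊕ Fin p) ∈ e)) := by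
    ext i; simp
  rw [hbi, Finset.card_biUnion]
  · have key : ∀ e ∈ s, (Finset.univ.filter
        (fun i : Fin p => (Sum.inl i : Fin p ⊕ Fin p) ∈ e)).card
        = if isInternal e then 2 else 1 := by
      intro e he
      rcases corona_edge (hedge e he) with ⟨i, j, hij, rfl⟩ | ⟨i, rfl⟩
      · rw [left_filter_internal hij, if_pos internal_internal,
          Finset.card_insert_of_notMem (by simpa using hij), Finset.card_singleton]
      · rw [left_filter_pendant, if_neg (not_internal_pendant i), Finset.card_singleton]
    rw [Finset.sum_congr rfl key, Finset.sum_ite, Finset.sum_const, Finset.sum_const,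
      smul_eq_mul, smul_eq_mul]
    have := Finset.card_filter_add_card_filter_not
      (s := s) (p := fun e => isInternal e)
    omega
  · intro x hx y hy hxy
    rw [Function.onFun, Finset.disjoint_left]
    intro i hix hiy
    simp only [Finset.mem_filter, Finset.mem_univ, true_and] at hix hiy
    exact hdisj x hx y hy hxy _ hix hiy

lemma Ddual_matching {m : ℕ} {s : Finset (Sym2 (Fin p ⊕ Fin p))}
    (hs : IsNMatching (corona p) m s) :
    m ≤ p ∧ IsNMatching (corona p) (p - m) (Ddual p s) := by
  obtain ⟨hcard, hedge, hdisj⟩ := hs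
  have hcov := covered_card ⟨hcard, hedge, hdisj⟩
  have hsplit := Finset.card_filter_add_card_filter_not
    (s := (Finset.univ : Finset (Fin p)))
    (p := fun i : Fin p => ∃ e ∈ s, (Sum.inl i : Fin p ⊕ Fin p) ∈ e)
  rw [Finset.card_univ, Fintype.card_fin] at hsplit
  have hDcard : (Ddual p s).card = (s.filter (fun e => isInternal e)).card +
      (Finset.univ.filter (fun i : Fin p =>
        ¬ ∃ e ∈ s, (Sum.inl i : Fin p ⊕ Fin p) ∈ e)).card := by
    rw [Ddual, Finset.card_union_of_disjoint, Finset.card_image_of_injOn]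
    · intro i _ j _ h
      exact pendant_eq_iff.1 h
    · rw [Finset.disjoint_left]
      intro e hei heim
      simp only [Finset.mem_filter] at hei
      simp only [Finset.mem_image] at heim
      obtain ⟨i, _, rfl⟩ := heim
      exact not_internal_pendant i hei.2
  have hmp : m ≤ p := by omega
  refine ⟨hmp, by omega, ?_, ?_⟩
  · intro e he
    rcases mem_Ddual.1 he with ⟨hes, _⟩ | ⟨i, _, rfl⟩
    · exact hedge e hes
    · exact pendant_mem_edgeSet i
  · intro e he f hf hef v hve hvf
    rcases mem_Ddual.1 he with ⟨hes, hei⟩ | ⟨i, hi, rfl⟩ <;>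
      rcases mem_Ddual.1 hf with ⟨hfs, hfi⟩ | ⟨j, hj, rfl⟩
    · exact hdisj e hes f hfs hef v hve hvf
    · rcases Sym2.mem_iff.1 hvf with rfl | rfl
      · exact hj ⟨e, hes, hve⟩
      · simpa using hei _ hve
    · rcases Sym2.mem_iff.1 hve with rfl | rfl
      · exact hi ⟨f, hfs, hvf⟩
      · simpa using hfi _ hvf
    · have hij : i ≠ j := fun h => hef (by rw [h])
      rcases Sym2.mem_iff.1 hve with rfl | rfl <;>
        rcases Sym2.mem_iff.1 hvf with h | h <;> simp_all

lemma uncov_Ddual {m : ℕ} {s : Finset (Sym2 (Fin p ⊕ Fin p))}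
    (hs : IsNMatching (corona p) m s) (i : Fin p) :
    (¬ ∃ e ∈ Ddual p s, (Sum.inl i : Fin p ⊕ Fin p) ∈ e) ↔
      s(Sum.inl i, (Sum.inr i : Fin p ⊕ Fin p)) ∈ s := by
  obtain ⟨hcard, hedge, hdisj⟩ := hs
  constructor
  · intro h
    by_contra hpen
    rcases Classical.em (∃ e ∈ s, (Sum.inl i : Fin p ⊕ Fin p) ∈ e) with ⟨e, hes, hie⟩ | hnc
    · rcases corona_edge (hedge e hes) with ⟨a, b, hab, rfl⟩ | ⟨a, rfl⟩
      · exact h ⟨_, mem_Ddual.2 (Or.inl ⟨hes, internal_internal⟩), hie⟩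
      · rcases Sym2.mem_iff.1 hie with h' | h'
        · obtain rfl : a = i := by simpa using h'.symm
          exact hpen hes
        · simp at h'
    · exact h ⟨_, mem_Ddual.2 (Or.inr ⟨i, hnc, rfl⟩), by simp⟩
  · rintro hpen ⟨e, heD, hie⟩
    rcases mem_Ddual.1 heD with ⟨hes, hint⟩ | ⟨j, hj, rfl⟩
    · have hne : e ≠ s(Sum.inl i, (Sum.inr i : Fin p ⊕ Fin p)) := by
        rintro rfl; exact not_internal_pendant i hint
      exact hdisj e hes _ hpen hne _ hie (by simp)
    · rcases Sym2.mem_iff.1 hie with h' | h'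
      · obtain rfl : j = i := by simpa using h'.symm
        exact hj ⟨_, hpen, by simp⟩
      · simp at h'

lemma Ddual_Ddual {m : ℕ} {s : Finset (Sym2 (Fin p ⊕ Fin p))}
    (hs : IsNMatching (corona p) m s) :
    Ddual p (Ddual p s) = s := by
  ext e
  rw [mem_Ddual]
  constructor
  · rintro (⟨heD, hint⟩ | ⟨i, hi, rfl⟩)
    · rcases mem_Ddual.1 heD with ⟨hes, _⟩ | ⟨i, _, rfl⟩
      · exact hes
      · exact absurd hint (not_internal_pendant i)
    · exact (uncov_Ddual hs i).1 hi
  · intro hes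
    rcases corona_edge (hs.2.1 e hes) with ⟨a, b, hab, rfl⟩ | ⟨a, rfl⟩
    · exact Or.inl ⟨mem_Ddual.2 (Or.inl ⟨hes, internal_internal⟩), internal_internal⟩
    · exact Or.inr ⟨a, (uncov_Ddual hs a).2 hes, rfl⟩

end CoronaAux

/-- Let `p = m + n ≥ 1` with `m, n ≥ 0`. For every `m`-matching `S` of
the corona graph `C_p`, the dual `D(S)` is an `n`-matching of `C_p`, `D(D(S)) = S`, and
`S ↦ D(S)` is a bijection from the `m`-matchings of `C_p` onto the `n`-matchings
of `C_p`. -/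
theorem corona_matching_duality (p m n : ℕ) (hp : p = m + n) (h1 : 1 ≤ p) :
    (∀ s : Finset (Sym2 (Fin p ⊕ Fin p)), IsNMatching (corona p) m s →
      IsNMatching (corona p) n (Ddual p s)) ∧
    (∀ s : Finset (Sym2 (Fin p ⊕ Fin p)), IsNMatching (corona p) m s →
      Ddual p (Ddual p s) = s) ∧
    ∃ F : {s : Finset (Sym2 (Fin p ⊕ Fin p)) // IsNMatching (corona p) m s} ≃
          {s : Finset (Sym2 (Fin p ⊕ Fin p)) // IsNMatching (corona p) n s},
      ∀ s, (F s : Finset (Sym2 (Fin p ⊕ Fin p))) = Ddual p s.1 := by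

  have key : ∀ k l : ℕ, p = k + l →
      ∀ s : Finset (Sym2 (Fin p ⊕ Fin p)), IsNMatching (corona p) k s →
        IsNMatching (corona p) l (Ddual p s) := by
    intro k l hkl s hs
    have h := (CoronaAux.Ddual_matching hs).2
    have : p - k = l := by omega
    rwa [this] at h
  refine ⟨key m n hp, fun s hs => CoronaAux.Ddual_Ddual hs, ?_⟩
  refine ⟨⟨fun s => ⟨Ddual p s.1, key m n hp s.1 s.2⟩,
    fun s => ⟨Ddual p s.1, key n m (by omega) s.1 s.2⟩, ?_, ?_⟩, fun s => rfl⟩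
  · intro s
    exact Subtype.ext (CoronaAux.Ddual_Ddual s.2)
  · intro s
    exact Subtype.ext (CoronaAux.Ddual_Ddual s.2)
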